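/- Let A_0, ..., A_{t-1} be topical operators and suppose rk(A_{n-1}⋯A_1)=1 for some n ≤ t. Let x_{st}=max_i(A_{t-1}⋯A_s 0)_i and F_0^n = σ(A_0,...,A_{n-1}). Then |x_{0t} − x_{1t} − E(x_{0t}−x_{1t} | F_0^n)| = 0 on the event {rk(A_{n-1}⋯A_1)=1}, and in general this conditional deviation is bounded by 1_{{rk(A_{n-1}⋯A_1)≠1}} · |A_0 0|_P, where |x|_P = max_i x_i − min_i x_i. -/
import Mathlib


open MeasureTheory

/-- A map on `ℝ^d` is *topical* if it is isotone and additively homogeneous. -/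
def Topical (d : ℕ) (A : (Fin d → ℝ) → (Fin d → ℝ)) : Prop :=
  (∀ x y : Fin d → ℝ, x ≤ y → A x ≤ A y) ∧
  (∀ (x : Fin d → ℝ) (a : ℝ), A (x + fun _ => a) = A x + fun _ => a)

/-- `compOp A s n = A_{s+n-1} ∘ ⋯ ∘ A_s`. -/
def compOp {d : ℕ} (A : ℕ → (Fin d → ℝ) → (Fin d → ℝ)) (s : ℕ) :
    ℕ → (Fin d → ℝ) → (Fin d → ℝ)
  | 0 => id
  | n + 1 => A (s + n) ∘ compOp A s n

/-- `θ` has rank 1: the induced map on `ℝ^d / ℝ·1` is constant. -/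
def Rank1 (d : ℕ) (θ : (Fin d → ℝ) → (Fin d → ℝ)) : Prop :=
  ∀ x y : Fin d → ℝ, ∃ a : ℝ, θ x = θ y + fun _ => a

/-- The projective norm `|x|_P = max_i x_i - min_i x_i`. -/
noncomputable def projNorm {d : ℕ} (x : Fin d → ℝ) : ℝ := (⨆ i, x i) - ⨅ i, x i

/-- `x_{st}(ω) = max_i (A_{t-1}⋯A_s 0)_i` with `A_m(ω) = op (ω m)`. -/
noncomputable def xst {E : Type*} (d : ℕ) [NeZero d]
    (op : E → (Fin d → ℝ) → (Fin d → ℝ)) (s t : ℕ) (ω : ℕ → E) : ℝ :=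
  ⨆ i, compOp (fun m => op (ω m)) s (t - s) 0 i

/-- The σ-algebra `F₀ⁿ = σ(A_0, …, A_{n-1})` on the sequence space. -/
def pastFilt (E : Type*) [MeasurableSpace E] (n : ℕ) :
    MeasurableSpace (ℕ → E) :=
  MeasurableSpace.comap (fun (ω : ℕ → E) (i : Fin n) => ω i) inferInstance

lemma topical_id {d : ℕ} : Topical d id := ⟨fun _ _ h => h, fun _ _ => rfl⟩

lemma Topical.compo {d : ℕ} {A B : (Fin d → ℝ) → (Fin d → ℝ)}
    (hA : Topical d A) (hB : Topical d B) : Topical d (A ∘ B) := by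
  refine ⟨fun x y hxy => hA.1 _ _ (hB.1 _ _ hxy), fun x a => ?_⟩
  show A (B (x + fun _ => a)) = A (B x) + fun _ => a
  rw [hB.2 x a, hA.2 (B x) a]

lemma compOp_topical {d : ℕ} (A : ℕ → (Fin d → ℝ) → (Fin d → ℝ))
    (hA : ∀ m, Topical d (A m)) (s : ℕ) : ∀ k, Topical d (compOp A s k)
  | 0 => topical_id
  | (k + 1) => (hA (s + k)).compo (compOp_topical A hA s k)

lemma compOp_add {d : ℕ} (A : ℕ → (Fin d → ℝ) → (Fin d → ℝ)) (s p : ℕ) :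
    ∀ q, compOp A s (p + q) = compOp A (s + p) q ∘ compOp A s p
  | 0 => rfl
  | (q + 1) => by
      show A (s + (p + q)) ∘ compOp A s (p + q) = _
      rw [compOp_add A s p q]
      show A (s + (p + q)) ∘ (compOp A (s + p) q ∘ compOp A s p)
        = (A (s + p + q) ∘ compOp A (s + p) q) ∘ compOp A s p
      rw [Nat.add_assoc]
      rfl

lemma compOp_one {d : ℕ} (A : ℕ → (Fin d → ℝ) → (Fin d → ℝ)) (s : ℕ) :
    compOp A s 1 = A s := by
  show A (s + 0) ∘ id = A s
  rw [Nat.add_zero]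
  rfl

lemma compOp_congr {d : ℕ} {A A' : ℕ → (Fin d → ℝ) → (Fin d → ℝ)} (s : ℕ) :
    ∀ k, (∀ m, s ≤ m → m < s + k → A m = A' m) → compOp A s k = compOp A' s k
  | 0, _ => rfl
  | (k + 1), h => by
      show A (s + k) ∘ compOp A s k = A' (s + k) ∘ compOp A' s k
      rw [h (s + k) (by omega) (by omega),
        compOp_congr s k (fun m h1 h2 => h m h1 (by omega))]

section scalar
variable {d : ℕ} [NeZero d]

lemma fin_nonempty : Nonempty (Fin d) := ⟨⟨0, Nat.pos_of_ne_zero (NeZero.ne d)⟩⟩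

lemma sup_topical_le {Φ : (Fin d → ℝ) → (Fin d → ℝ)} (hΦ : Topical d Φ)
    (x y : Fin d → ℝ) (c : ℝ) (hxy : x ≤ y + fun _ => c) :
    (⨆ i, Φ x i) ≤ (⨆ i, Φ y i) + c := by
  haveI : Nonempty (Fin d) := fin_nonempty
  have h1 : Φ x ≤ Φ y + fun _ => c := by
    rw [← hΦ.2 y c]; exact hΦ.1 _ _ hxy
  refine ciSup_le fun i => ?_
  have h2 : Φ x i ≤ Φ y i + c := h1 i
  have h3 : Φ y i ≤ ⨆ j, Φ y j := le_ciSup (Set.finite_range _).bddAbove i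
  linarith

lemma sup_topical_ub {Φ : (Fin d → ℝ) → (Fin d → ℝ)} (hΦ : Topical d Φ)
    (x : Fin d → ℝ) : (⨆ i, Φ x i) ≤ (⨆ i, Φ (0:Fin d → ℝ) i) + ⨆ i, x i := by
  haveI : Nonempty (Fin d) := fin_nonempty
  refine sup_topical_le hΦ x 0 _ fun i => ?_
  have : x i ≤ ⨆ j, x j := le_ciSup (Set.finite_range _).bddAbove i
  simpa using this

lemma sup_topical_lb {Φ : (Fin d → ℝ) → (Fin d → ℝ)} (hΦ : Topical d Φ)
    (x : Fin d → ℝ) : (⨆ i, Φ (0:Fin d → ℝ) i) + (⨅ i, x i) ≤ ⨆ i, Φ x i := by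
  haveI : Nonempty (Fin d) := fin_nonempty
  have h := sup_topical_le hΦ 0 x (-(⨅ i, x i)) (fun i => ?_)
  · linarith
  · have : ⨅ j, x j ≤ x i := ciInf_le (Set.finite_range _).bddBelow i
    simp only [Pi.add_apply, Pi.zero_apply]
    linarith

lemma fin_sup_add (g : Fin d → ℝ) (a : ℝ) :
    (⨆ i, (g i + a)) = (⨆ i, g i) + a := by
  haveI : Nonempty (Fin d) := fin_nonempty
  refine le_antisymm (ciSup_le fun i => ?_) ?_
  · have : g i ≤ ⨆ j, g j := le_ciSup (Set.finite_range _).bddAbove i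
    linarith
  · have h : ∀ i, g i ≤ (⨆ j, (g j + a)) - a := fun i => by
      have : g i + a ≤ ⨆ j, (g j + a) :=
        le_ciSup (Set.finite_range (fun j => g j + a)).bddAbove i
      linarith
    have := ciSup_le h
    linarith

end scalar

section env

lemma exists_countable_inf_family {α : Type*} [PseudoMetricSpace α]
    [TopologicalSpace.SeparableSpace α] [Nonempty α] {ι : Type*} [Nonempty ι]
    (g : ι → α → ℝ) (hlip : ∀ j v w, g j v ≤ g j w + dist v w)
    (hbdd : ∀ v, BddBelow (Set.range fun j => g j v)) :
    ∃ τ : ℕ → ι, ∀ v, (⨅ p, g (τ p) v) = ⨅ j, g j v := by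
  obtain ⟨D, hD⟩ := TopologicalSpace.exists_dense_seq α
  have key : ∀ q k : ℕ, ∃ j : ι, g j (D q) < (⨅ j, g j (D q)) + 1 / ((k:ℝ) + 1) := by
    intro q k
    refine exists_lt_of_ciInf_lt ?_
    have h0 : (0:ℝ) < 1 / ((k:ℝ) + 1) := by positivity
    linarith
  choose J hJ using key
  refine ⟨fun p => J (Nat.unpair p).1 (Nat.unpair p).2, fun v => ?_⟩
  have hsub : BddBelow (Set.range fun p => g (J (Nat.unpair p).1 (Nat.unpair p).2) v) := by
    obtain ⟨b, hb⟩ := hbdd v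
    exact ⟨b, by rintro x ⟨p, rfl⟩; exact hb ⟨_, rfl⟩⟩
  refine le_antisymm ?_ (le_ciInf fun p => ciInf_le (hbdd v) _)
  have hbound : ∀ ε : ℝ, 0 < ε →
      (⨅ p, g (J (Nat.unpair p).1 (Nat.unpair p).2) v) ≤ (⨅ j, g j v) + ε := by
    intro ε hε
    obtain ⟨q, hq⟩ := Metric.denseRange_iff.mp hD v (ε/3) (by positivity)
    obtain ⟨k, hk⟩ := exists_nat_one_div_lt (show (0:ℝ) < ε/3 by positivity)
    have h1 : (⨅ p, g (J (Nat.unpair p).1 (Nat.unpair p).2) v) ≤ g (J q k) v := by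
      have h := ciInf_le hsub (Nat.pair q k)
      simpa [Nat.unpair_pair] using h
    have h2 : g (J q k) v ≤ g (J q k) (D q) + dist v (D q) := hlip _ _ _
    have h3 := hJ q k
    have h4 : (⨅ j, g j (D q)) ≤ (⨅ j, g j v) + dist (D q) v := by
      rw [← sub_le_iff_le_add]
      refine le_ciInf fun j => ?_
      have h5 : g j (D q) ≤ g j v + dist (D q) v := hlip _ _ _
      have h6 : (⨅ j', g j' (D q)) ≤ g j (D q) := ciInf_le (hbdd (D q)) j
      linarith
    have hdc : dist (D q) v = dist v (D q) := dist_comm _ _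
    linarith
  by_contra hc
  push_neg at hc
  have := hbound (((⨅ p, g (J (Nat.unpair p).1 (Nat.unpair p).2) v) - (⨅ j, g j v)) / 2) (by linarith)
  linarith

lemma exists_countable_sup_family {α : Type*} [PseudoMetricSpace α]
    [TopologicalSpace.SeparableSpace α] [Nonempty α] {ι : Type*} [Nonempty ι]
    (g : ι → α → ℝ) (hlip : ∀ j v w, g j v ≤ g j w + dist v w)
    (hbdd : ∀ v, BddAbove (Set.range fun j => g j v)) :
    ∃ τ : ℕ → ι, ∀ v, (⨆ p, g (τ p) v) = ⨆ j, g j v := by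
  obtain ⟨D, hD⟩ := TopologicalSpace.exists_dense_seq α
  have key : ∀ q k : ℕ, ∃ j : ι, (⨆ j, g j (D q)) - 1 / ((k:ℝ) + 1) < g j (D q) := by
    intro q k
    refine exists_lt_of_lt_ciSup ?_
    have h0 : (0:ℝ) < 1 / ((k:ℝ) + 1) := by positivity
    linarith
  choose J hJ using key
  refine ⟨fun p => J (Nat.unpair p).1 (Nat.unpair p).2, fun v => ?_⟩
  have hsub : BddAbove (Set.range fun p => g (J (Nat.unpair p).1 (Nat.unpair p).2) v) := by
    obtain ⟨b, hb⟩ := hbdd v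
    exact ⟨b, by rintro x ⟨p, rfl⟩; exact hb ⟨_, rfl⟩⟩
  refine le_antisymm (ciSup_le fun p => le_ciSup (hbdd v) _) ?_
  have hbound : ∀ ε : ℝ, 0 < ε →
      (⨆ j, g j v) ≤ (⨆ p, g (J (Nat.unpair p).1 (Nat.unpair p).2) v) + ε := by
    intro ε hε
    obtain ⟨q, hq⟩ := Metric.denseRange_iff.mp hD v (ε/3) (by positivity)
    obtain ⟨k, hk⟩ := exists_nat_one_div_lt (show (0:ℝ) < ε/3 by positivity)
    have h1 : g (J q k) v ≤ ⨆ p, g (J (Nat.unpair p).1 (Nat.unpair p).2) v := by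
      have h := le_ciSup hsub (Nat.pair q k)
      simpa [Nat.unpair_pair] using h
    have h2 : g (J q k) (D q) ≤ g (J q k) v + dist (D q) v := hlip _ _ _
    have h3 := hJ q k
    have h4 : (⨆ j, g j v) ≤ (⨆ j, g j (D q)) + dist v (D q) := by
      refine ciSup_le fun j => ?_
      have h5 : g j v ≤ g j (D q) + dist v (D q) := hlip _ _ _
      have h6 : g j (D q) ≤ ⨆ j', g j' (D q) := le_ciSup (hbdd (D q)) j
      linarith
    have hdc : dist (D q) v = dist v (D q) := dist_comm _ _
    linarith
  by_contra hc
  push_neg at hc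
  have := hbound (((⨆ j, g j v) - (⨆ p, g (J (Nat.unpair p).1 (Nat.unpair p).2) v)) / 2) (by linarith)
  linarith

end env

/-- On the event `{rk(A_{n-1}⋯A_1) = 1}` the conditional deviation
`|x_{0t} - x_{1t} - E(x_{0t} - x_{1t} | F₀ⁿ)|` vanishes, and in general it is
bounded by `1_{{rk(A_{n-1}⋯A_1) ≠ 1}} · |A_0 0|_P`. -/
theorem conditional_deviation_bound {E : Type*} [MeasurableSpace E]
    {d : ℕ} [NeZero d]
    (μ : Measure (ℕ → E)) [IsProbabilityMeasure μ]
    (op : E → (Fin d → ℝ) → (Fin d → ℝ)) (hop : ∀ e, Topical d (op e))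
    (t n : ℕ) (hn : 1 ≤ n) (hnt : n ≤ t)
    (hmeasx : ∀ s u : ℕ, Measurable (xst d op s u))
    (hint : Integrable (fun ω => xst d op 0 t ω - xst d op 1 t ω) μ)
    (hB : MeasurableSet[pastFilt E n]
      {ω : ℕ → E | Rank1 d (compOp (fun m => op (ω m)) 1 (n - 1))})
    (hFmeas : Measurable[pastFilt E n]
      (fun ω => xst d op 0 n ω - xst d op 1 n ω)) :
    (∀ᵐ ω ∂μ, Rank1 d (compOp (fun m => op (ω m)) 1 (n - 1)) →
      |xst d op 0 t ω - xst d op 1 t ω -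
        (μ[fun ω' => xst d op 0 t ω' - xst d op 1 t ω' | pastFilt E n]) ω| = 0) ∧
    (∀ᵐ ω ∂μ,
      |xst d op 0 t ω - xst d op 1 t ω -
        (μ[fun ω' => xst d op 0 t ω' - xst d op 1 t ω' | pastFilt E n]) ω| ≤
      ({ω' : ℕ → E | ¬ Rank1 d (compOp (fun m => op (ω' m)) 1 (n - 1))}.indicator
          (fun _ => (1 : ℝ)) ω) * projNorm (op (ω 0) 0)) := by
  
  classical
  rcases isEmpty_or_nonempty E with hE | hE
  · haveI : IsEmpty (ℕ → E) := ⟨fun f => hE.false (f 0)⟩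
    have h1 : μ Set.univ = 1 := measure_univ
    rw [Set.univ_eq_empty_iff.mpr inferInstance, measure_empty] at h1
    exact absurd h1 zero_ne_one
  haveI : Nonempty (Fin d) := fin_nonempty
  haveI : Nonempty (ℕ → E) := ⟨fun _ => Classical.arbitrary E⟩
  have ht1 : 1 ≤ t := hn.trans hnt
  set f : (ℕ → E) → ℝ := fun ω => xst d op 0 t ω - xst d op 1 t ω with hfdef
  set hh : (ℕ → E) → ℝ := fun ω => xst d op 0 n ω - xst d op 1 n ω with hhdef
  set ψ : (ℕ → E) → ℝ := μ[f|pastFilt E n] with hψdef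
  set G : (ℕ → E) → (Fin d → ℝ) → ℝ := fun τ v =>
    (⨆ i, compOp (fun m => op (τ m)) 1 (t - 1) v i) -
      (⨆ i, compOp (fun m => op (τ m)) 1 (t - 1) (0 : Fin d → ℝ) i) with hGdef
  have htop : ∀ (τ : ℕ → E) (s k : ℕ), Topical d (compOp (fun m => op (τ m)) s k) :=
    fun τ s k => compOp_topical _ (fun m => hop _) s k
  -- decomposition of compOp at time 1
  have hcomp : ∀ (u : ℕ), 1 ≤ u → ∀ ω : ℕ → E,
      compOp (fun m => op (ω m)) 0 u (0 : Fin d → ℝ)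
        = compOp (fun m => op (ω m)) 1 (u - 1) (op (ω 0) 0) := by
    intro u hu ω
    have h0 : 1 + (u - 1) = u := by omega
    have hadd := compOp_add (fun m => op (ω m)) 0 1 (u - 1)
    calc compOp (fun m => op (ω m)) 0 u (0 : Fin d → ℝ)
        = compOp (fun m => op (ω m)) 0 (1 + (u - 1)) (0 : Fin d → ℝ) := by rw [h0]
      _ = compOp (fun m => op (ω m)) (0 + 1) (u - 1)
            (compOp (fun m => op (ω m)) 0 1 (0 : Fin d → ℝ)) := by rw [hadd]; rfl
      _ = compOp (fun m => op (ω m)) 1 (u - 1) (op (ω 0) 0) := by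
            rw [compOp_one]
  have hxst0t : ∀ ω : ℕ → E, xst d op 0 t ω
      = ⨆ i, compOp (fun m => op (ω m)) 1 (t - 1) (op (ω 0) 0) i := by
    intro ω
    show (⨆ i, compOp (fun m => op (ω m)) 0 (t - 0) 0 i) = _
    rw [Nat.sub_zero, hcomp t ht1 ω]
  have hxst1t : ∀ ω : ℕ → E, xst d op 1 t ω
      = ⨆ i, compOp (fun m => op (ω m)) 1 (t - 1) (0 : Fin d → ℝ) i := fun ω => rfl
  have hfG : ∀ ω : ℕ → E, f ω = G ω (op (ω 0) 0) := by
    intro ω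
    show xst d op 0 t ω - xst d op 1 t ω = G ω (op (ω 0) 0)
    rw [hxst0t ω, hxst1t ω, hGdef]
  -- Lipschitz and bounds for G
  have hGlip : ∀ (τ : ℕ → E) (v w : Fin d → ℝ), G τ v ≤ G τ w + dist v w := by
    intro τ v w
    have hle : v ≤ w + fun _ => (⨆ i, (v i - w i)) := by
      intro i
      have h1 : v i - w i ≤ ⨆ j, (v j - w j) :=
        le_ciSup (Set.finite_range (fun j => v j - w j)).bddAbove i
      simp only [Pi.add_apply]
      linarith
    have h1 := sup_topical_le (htop τ 1 (t - 1)) v w _ hle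
    have h2 : (⨆ i, (v i - w i)) ≤ dist v w := by
      refine ciSup_le fun i => ?_
      have h3 : dist (v i) (w i) ≤ dist v w := dist_le_pi_dist v w i
      rw [Real.dist_eq] at h3
      exact (le_abs_self _).trans h3
    show (⨆ i, compOp (fun m => op (τ m)) 1 (t - 1) v i) -
        (⨆ i, compOp (fun m => op (τ m)) 1 (t - 1) (0 : Fin d → ℝ) i) ≤ _
    have h4 : G τ w = (⨆ i, compOp (fun m => op (τ m)) 1 (t - 1) w i) -
        (⨆ i, compOp (fun m => op (τ m)) 1 (t - 1) (0 : Fin d → ℝ) i) := rfl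
    rw [h4]
    linarith
  have hGub : ∀ (τ : ℕ → E) (v : Fin d → ℝ), G τ v ≤ ⨆ i, v i := by
    intro τ v
    have := sup_topical_ub (htop τ 1 (t - 1)) v
    show (⨆ i, compOp (fun m => op (τ m)) 1 (t - 1) v i) - _ ≤ _
    linarith
  have hGlb : ∀ (τ : ℕ → E) (v : Fin d → ℝ), (⨅ i, v i) ≤ G τ v := by
    intro τ v
    have := sup_topical_lb (htop τ 1 (t - 1)) v
    show _ ≤ (⨆ i, compOp (fun m => op (τ m)) 1 (t - 1) v i) - _
    linarith
  have hGupdate : ∀ (τ : ℕ → E) (e : E) (v : Fin d → ℝ),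
      G (Function.update τ 0 e) v = G τ v := by
    intro τ e v
    have hco : compOp (fun m => op (Function.update τ 0 e m)) 1 (t - 1)
        = compOp (fun m => op (τ m)) 1 (t - 1) := by
      refine compOp_congr 1 (t - 1) fun m h1 h2 => ?_
      rw [Function.update_of_ne (by omega : m ≠ 0)]
    show (⨆ i, compOp (fun m => op (Function.update τ 0 e m)) 1 (t - 1) v i) - _ = _
    rw [hco]
  -- the rank-one identity
  have hfh : ∀ ω : ℕ → E, Rank1 d (compOp (fun m => op (ω m)) 1 (n - 1)) →
      f ω = hh ω := by
    intro ω hr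
    obtain ⟨a, ha⟩ := hr (op (ω 0) 0) 0
    have hhval : hh ω = a := by
      show xst d op 0 n ω - xst d op 1 n ω = a
      have e1 : xst d op 0 n ω
          = ⨆ i, compOp (fun m => op (ω m)) 1 (n - 1) (op (ω 0) 0) i := by
        show (⨆ i, compOp (fun m => op (ω m)) 0 (n - 0) 0 i) = _
        rw [Nat.sub_zero, hcomp n hn ω]
      have e2 : xst d op 1 n ω
          = ⨆ i, compOp (fun m => op (ω m)) 1 (n - 1) (0 : Fin d → ℝ) i := rfl
      rw [e1, e2, ha]
      simp only [Pi.add_apply]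
      rw [fin_sup_add]
      ring
    have hsplit : compOp (fun m => op (ω m)) 1 (t - 1)
        = compOp (fun m => op (ω m)) n (t - n) ∘ compOp (fun m => op (ω m)) 1 (n - 1) := by
      have h0 : (n - 1) + (t - n) = t - 1 := by omega
      have h1 : 1 + (n - 1) = n := by omega
      calc compOp (fun m => op (ω m)) 1 (t - 1)
          = compOp (fun m => op (ω m)) 1 ((n - 1) + (t - n)) := by rw [h0]
        _ = compOp (fun m => op (ω m)) (1 + (n - 1)) (t - n)
              ∘ compOp (fun m => op (ω m)) 1 (n - 1) :=
            compOp_add (fun m => op (ω m)) 1 (n - 1) (t - n)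
        _ = _ := by rw [h1]
    have e3 : compOp (fun m => op (ω m)) 1 (t - 1) (op (ω 0) 0)
        = compOp (fun m => op (ω m)) 1 (t - 1) (0 : Fin d → ℝ) + fun _ => a := by
      rw [hsplit]
      show compOp (fun m => op (ω m)) n (t - n)
          (compOp (fun m => op (ω m)) 1 (n - 1) (op (ω 0) 0)) = _
      rw [ha]
      exact (htop ω n (t - n)).2 _ a
    have hfa : f ω = a := by
      show xst d op 0 t ω - xst d op 1 t ω = a
      rw [hxst0t ω, hxst1t ω, e3]
      simp only [Pi.add_apply]
      rw [fin_sup_add]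
      ring
    rw [hfa, hhval]
  -- countable envelopes
  have hbddB : ∀ v : Fin d → ℝ, BddBelow (Set.range fun j : ℕ → E => G j v) := by
    intro v
    exact ⟨⨅ i, v i, by rintro x ⟨τ, rfl⟩; exact hGlb τ v⟩
  have hbddA : ∀ v : Fin d → ℝ, BddAbove (Set.range fun j : ℕ → E => G j v) := by
    intro v
    exact ⟨⨆ i, v i, by rintro x ⟨τ, rfl⟩; exact hGub τ v⟩
  obtain ⟨τL, hτL⟩ := exists_countable_inf_family G hGlip hbddB
  obtain ⟨τU, hτU⟩ := exists_countable_sup_family G hGlip hbddA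
  set ℓf : (ℕ → E) → ℝ := fun ω => ⨅ p, G (τL p) (op (ω 0) 0) with hℓdef
  set uf : (ℕ → E) → ℝ := fun ω => ⨆ p, G (τU p) (op (ω 0) 0) with hudef
  have hℓle : ∀ ω : ℕ → E, ℓf ω ≤ f ω := by
    intro ω
    rw [hfG ω]
    show (⨅ p, G (τL p) (op (ω 0) 0)) ≤ G ω (op (ω 0) 0)
    rw [hτL]
    exact ciInf_le (hbddB _) ω
  have hufe : ∀ ω : ℕ → E, f ω ≤ uf ω := by
    intro ω
    rw [hfG ω]
    show G ω (op (ω 0) 0) ≤ ⨆ p, G (τU p) (op (ω 0) 0)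
    rw [hτU]
    exact le_ciSup (hbddA _) ω
  have hℓlb : ∀ ω : ℕ → E, (⨅ i, op (ω 0) 0 i) ≤ ℓf ω := by
    intro ω
    exact le_ciInf fun p => hGlb _ _
  have huub : ∀ ω : ℕ → E, uf ω ≤ ⨆ i, op (ω 0) 0 i := by
    intro ω
    exact ciSup_le fun p => hGub _ _
  -- measurability
  have hFle : pastFilt E n ≤ (inferInstance : MeasurableSpace (ℕ → E)) :=
    Measurable.comap_le (measurable_pi_lambda _ fun i => measurable_pi_apply _)
  have hπ : Measurable[pastFilt E n] (fun (ω : ℕ → E) (i : Fin n) => ω (i : ℕ)) :=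
    Measurable.of_comap_le le_rfl
  have heval0 : Measurable[pastFilt E n] (fun ω : ℕ → E => ω 0) := by
    have h0 : Measurable (fun v : Fin n → E => v ⟨0, by omega⟩) := measurable_pi_apply _
    exact h0.comp hπ
  have hfmeas : Measurable f := (hmeasx 0 t).sub (hmeasx 1 t)
  have hsec : ∀ τ : ℕ → E, Measurable fun e : E => G τ (op e 0) := by
    intro τ
    have heq : (fun e : E => G τ (op e 0)) = fun e => f (Function.update τ 0 e) := by
      funext e
      rw [hfG (Function.update τ 0 e), Function.update_self, hGupdate]
    rw [heq]
    exact hfmeas.comp (measurable_update τ)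
  have hmeasℓ : Measurable[pastFilt E n] ℓf :=
    Measurable.iInf fun p => (hsec (τL p)).comp heval0
  have hmeasu : Measurable[pastFilt E n] uf :=
    Measurable.iSup fun p => (hsec (τU p)).comp heval0
  haveI hSF : SigmaFinite (μ.trim hFle) := by infer_instance
  -- sandwich: for each k, on the truncation set
  have key : ∀ k : ℕ, ∀ᵐ ω ∂μ,
      (ℓf ω ∈ Set.Icc (-(k : ℝ)) (k : ℝ) ∧ uf ω ∈ Set.Icc (-(k : ℝ)) (k : ℝ)) →
        (ℓf ω ≤ ψ ω ∧ ψ ω ≤ uf ω) := by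
    intro k
    set Dk : Set (ℕ → E) :=
      ℓf ⁻¹' Set.Icc (-(k : ℝ)) (k : ℝ) ∩ uf ⁻¹' Set.Icc (-(k : ℝ)) (k : ℝ) with hDkdef
    have hDk : MeasurableSet[pastFilt E n] Dk :=
      MeasurableSet.inter (hmeasℓ measurableSet_Icc) (hmeasu measurableSet_Icc)
    have hDk' : MeasurableSet Dk := hFle _ hDk
    have hind_f : Integrable (Dk.indicator f) μ := hint.indicator hDk'
    have hu_int : Integrable (Dk.indicator uf) μ := by
      refine Integrable.mono' (integrable_const (k : ℝ))
        ((hmeasu.mono hFle le_rfl).indicator hDk').aestronglyMeasurable ?_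
      refine Filter.Eventually.of_forall fun ω => ?_
      by_cases hω : ω ∈ Dk
      · rw [Set.indicator_of_mem hω, Real.norm_eq_abs]
        exact abs_le.mpr ⟨hω.2.1, hω.2.2⟩
      · rw [Set.indicator_of_notMem hω]
        simp
    have hℓ_int : Integrable (Dk.indicator ℓf) μ := by
      refine Integrable.mono' (integrable_const (k : ℝ))
        ((hmeasℓ.mono hFle le_rfl).indicator hDk').aestronglyMeasurable ?_
      refine Filter.Eventually.of_forall fun ω => ?_
      by_cases hω : ω ∈ Dk
      · rw [Set.indicator_of_mem hω, Real.norm_eq_abs]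
        exact abs_le.mpr ⟨hω.1.1, hω.1.2⟩
      · rw [Set.indicator_of_notMem hω]
        simp
    have hk1 : μ[Dk.indicator f|pastFilt E n] =ᵐ[μ] Dk.indicator ψ :=
      condExp_indicator hint hDk
    have hcu : μ[Dk.indicator uf|pastFilt E n] = Dk.indicator uf :=
      condExp_of_stronglyMeasurable hFle
        ((hmeasu.indicator hDk).stronglyMeasurable) hu_int
    have hcl : μ[Dk.indicator ℓf|pastFilt E n] = Dk.indicator ℓf :=
      condExp_of_stronglyMeasurable hFle
        ((hmeasℓ.indicator hDk).stronglyMeasurable) hℓ_int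
    have hmono_u : μ[Dk.indicator f|pastFilt E n] ≤ᵐ[μ] μ[Dk.indicator uf|pastFilt E n] := by
      refine condExp_mono hind_f hu_int (Filter.Eventually.of_forall fun ω => ?_)
      by_cases hω : ω ∈ Dk
      · rw [Set.indicator_of_mem hω, Set.indicator_of_mem hω]
        exact hufe ω
      · rw [Set.indicator_of_notMem hω, Set.indicator_of_notMem hω]
    have hmono_l : μ[Dk.indicator ℓf|pastFilt E n] ≤ᵐ[μ] μ[Dk.indicator f|pastFilt E n] := by
      refine condExp_mono hℓ_int hind_f (Filter.Eventually.of_forall fun ω => ?_)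
      by_cases hω : ω ∈ Dk
      · rw [Set.indicator_of_mem hω, Set.indicator_of_mem hω]
        exact hℓle ω
      · rw [Set.indicator_of_notMem hω, Set.indicator_of_notMem hω]
    filter_upwards [hk1, hmono_u, hmono_l] with ω e1 e2 e3 hmem
    have hmemDk : ω ∈ Dk := hmem
    rw [hcu] at e2
    rw [hcl] at e3
    rw [e1] at e2 e3
    rw [Set.indicator_of_mem hmemDk] at e2 e3
    rw [Set.indicator_of_mem hmemDk] at e2
    rw [Set.indicator_of_mem hmemDk] at e3
    exact ⟨e3, e2⟩
  have aesand : ∀ᵐ ω ∂μ, ℓf ω ≤ ψ ω ∧ ψ ω ≤ uf ω := by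
    have hall := ae_all_iff.mpr key
    filter_upwards [hall] with ω hω
    obtain ⟨k, hk⟩ := exists_nat_ge (max |ℓf ω| |uf ω|)
    have h1 : |ℓf ω| ≤ (k : ℝ) := (le_max_left _ _).trans hk
    have h2 : |uf ω| ≤ (k : ℝ) := (le_max_right _ _).trans hk
    rw [abs_le] at h1 h2
    exact hω k ⟨⟨h1.1, h1.2⟩, ⟨h2.1, h2.2⟩⟩
  -- part 1: on the rank-one event the conditional expectation equals f
  set Bset : Set (ℕ → E) :=
    {ω : ℕ → E | Rank1 d (compOp (fun m => op (ω m)) 1 (n - 1))} with hBdef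
  have hBamb : MeasurableSet Bset := hFle _ hB
  have hindBf_eq : Bset.indicator f = Bset.indicator hh := by
    funext ω
    by_cases hω : ω ∈ Bset
    · rw [Set.indicator_of_mem hω, Set.indicator_of_mem hω]
      exact hfh ω hω
    · rw [Set.indicator_of_notMem hω, Set.indicator_of_notMem hω]
  have hBint : Integrable (Bset.indicator f) μ := hint.indicator hBamb
  have h5 : μ[Bset.indicator f|pastFilt E n] =ᵐ[μ] Bset.indicator ψ :=
    condExp_indicator hint hB
  have h6 : μ[Bset.indicator f|pastFilt E n] = Bset.indicator f := by
    rw [hindBf_eq]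
    exact condExp_of_stronglyMeasurable hFle
      ((hFmeas.indicator hB).stronglyMeasurable) (hindBf_eq ▸ hBint)
  have aeB : ∀ᵐ ω ∂μ, ω ∈ Bset → ψ ω = f ω := by
    filter_upwards [h5] with ω hω hmem
    have h7 : Bset.indicator f ω = Bset.indicator ψ ω := (congrFun h6 ω).symm.trans hω
    rw [Set.indicator_of_mem hmem, Set.indicator_of_mem hmem] at h7
    exact h7.symm
  constructor
  · filter_upwards [aeB] with ω hω hr
    have hψf : ψ ω = f ω := hω hr
    rw [hψf]
    show |f ω - f ω| = 0
    simp
  · filter_upwards [aeB, aesand] with ω h1 h2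
    by_cases hr : Rank1 d (compOp (fun m => op (ω m)) 1 (n - 1))
    · have hnm : ω ∉ {ω' : ℕ → E | ¬ Rank1 d (compOp (fun m => op (ω' m)) 1 (n - 1))} :=
        fun hc => hc hr
      have hz : ({ω' : ℕ → E | ¬ Rank1 d (compOp (fun m => op (ω' m)) 1 (n - 1))}.indicator
          (fun _ => (1 : ℝ)) ω) = 0 :=
        Set.indicator_of_notMem hnm _
      rw [hz, zero_mul, h1 hr]
      show |f ω - f ω| ≤ 0
      simp
    · have hm : ω ∈ {ω' : ℕ → E | ¬ Rank1 d (compOp (fun m => op (ω' m)) 1 (n - 1))} := hr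
      have hone : ({ω' : ℕ → E | ¬ Rank1 d (compOp (fun m => op (ω' m)) 1 (n - 1))}.indicator
          (fun _ => (1 : ℝ)) ω) = 1 :=
        Set.indicator_of_mem hm _
      rw [hone, one_mul]
      show |f ω - ψ ω| ≤ projNorm (op (ω 0) 0)
      have hb1 := hℓle ω
      have hb2 := hufe ω
      have hb3 := hℓlb ω
      have hb4 := huub ω
      have hb5 := h2.1
      have hb6 := h2.2
      rw [projNorm]
      rw [abs_le]
      constructor
      · linarith
      · linarith
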